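/- Let K be a field and let Δ, Λ ∈ U^n(K) be upper triangular n×n matrices. For each 1 ≤ i ≤ n let V_i ≤ K^{n+1} be the row space of the i×(n+1) matrix (I_i | Δ_[i]) and let W_i ≤ K^{n+1} be the row space of (I_i | Λ_[i]). Then Σ_{i=1}^{n} d(V_i, W_i) = frk(Δ − Λ), i.e., the sum of the Grassmann distances equals the flag rank of the difference Δ − Λ. -/

import Mathlib

/-- The space `U^n(K)` of upper triangular `n × n` matrices over `K`,
as a `K`-subspace of the matrix space. -/
def UT (K : Type*) [Field K] (n : ℕ) : Submodule K (Matrix (Fin n) (Fin n) K) where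
  carrier := {A | ∀ i j : Fin n, (j : ℕ) < (i : ℕ) → A i j = 0}
  add_mem' := by
    intro a b ha hb i j h
    simp [Matrix.add_apply, ha i j h, hb i j h]
  zero_mem' := by
    intro i j h
    simp
  smul_mem' := by
    intro c a ha i j h
    simp [Matrix.smul_apply, ha i j h]

/-- For `Δ ∈ U^n(K)` and `i : Fin n` (representing the 1-indexed value `i+1`),
the upper-right corner submatrix `Δ_[i+1] ∈ K^{(i+1) × (n+1-(i+1))}`,
consisting of the entries `Δ_{k,ℓ}` with (1-indexed) `1 ≤ k ≤ i+1`, `i+1 ≤ ℓ ≤ n`. -/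
def corner {K : Type*} [Field K] {n : ℕ} (Δ : Matrix (Fin n) (Fin n) K) (i : Fin n) :
    Matrix (Fin ((i : ℕ) + 1)) (Fin (n + 1 - ((i : ℕ) + 1))) K :=
  Matrix.of fun k l =>
    Δ ⟨k, by have := k.isLt; have := i.isLt; omega⟩
      ⟨(i : ℕ) + l, by have := l.isLt; have := i.isLt; omega⟩

/-- The flag rank of an upper triangular matrix: the sum of the ranks of its
upper-right corner submatrices, `frk Δ = Σ_{i=1}^{n} rank Δ_[i]`. -/
noncomputable def frk {K : Type*} [Field K] {n : ℕ} (Δ : Matrix (Fin n) (Fin n) K) : ℕ :=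
  ∑ i : Fin n, (corner Δ i).rank

/-- The block matrix `(I_i | A)` of size `i × m`, for `A ∈ K^{i × (m - i)}`. -/
def Psi {K : Type*} [Field K] {i m : ℕ} (A : Matrix (Fin i) (Fin (m - i)) K) :
    Matrix (Fin i) (Fin m) K :=
  Matrix.of fun r c =>
    if h : (c : ℕ) < i then (if (c : ℕ) = (r : ℕ) then 1 else 0)
    else A r ⟨(c : ℕ) - i, by have := c.isLt; omega⟩

/-- The row space of a matrix, as a subspace of `K^p`. -/
def rowSpace {K : Type*} [Field K] {m p : ℕ} (M : Matrix (Fin m) (Fin p) K) :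
    Submodule K (Fin p → K) :=
  Submodule.span K (Set.range fun r => M r)

open Module

section Aux


variable {K : Type*} [Field K] {i m : ℕ}

/-- extension by zero -/
def ext0 (K : Type*) [Field K] (i m : ℕ) (h : i ≤ m) :
    (Fin (m - i) → K) →ₗ[K] (Fin m → K) where
  toFun v := fun c => if hc : (c : ℕ) < i then 0 else v ⟨(c : ℕ) - i, by have := c.isLt; omega⟩
  map_add' a b := by funext c; by_cases hc : (c : ℕ) < i <;> simp [hc]
  map_smul' a b := by funext c; by_cases hc : (c : ℕ) < i <;> simp [hc]

lemma ext0_inj (h : i ≤ m) : Function.Injective (ext0 K i m h) := by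
  intro a b hab
  funext l
  have hl : i + (l : ℕ) < m := by have := l.isLt; omega
  have := congrFun hab ⟨i + l, hl⟩
  simpa [ext0, Nat.add_sub_cancel_left] using this

lemma psi_vecMul (h : i ≤ m) (A : Matrix (Fin i) (Fin (m - i)) K) (v : Fin i → K) :
    ∀ c : Fin i, Matrix.vecMul v (Psi A) (Fin.castLE h c) = v c := by
  intro c
  have hc : ((Fin.castLE h c : Fin m) : ℕ) < i := c.isLt
  simp only [Matrix.vecMul, dotProduct, Psi, Matrix.of_apply, dif_pos hc]
  rw [Finset.sum_eq_single c]
  · simp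
  · intro b _ hb
    have hne : ¬ ((c : ℕ) = (b : ℕ)) := fun hh => hb (Fin.ext hh.symm)
    simp [hne]
  · simp

lemma key (h : i ≤ m) (A B : Matrix (Fin i) (Fin (m - i)) K) :
    finrank K ↥(Submodule.span K (Set.range fun r => Psi A r) ⊔
        Submodule.span K (Set.range fun r => Psi B r)) -
      finrank K ↥(Submodule.span K (Set.range fun r => Psi A r) ⊓
        Submodule.span K (Set.range fun r => Psi B r)) =
      2 * (A - B).rank := by
  set V := Submodule.span K (Set.range fun r => Psi A r) with hVdef
  set W := Submodule.span K (Set.range fun r => Psi B r) with hWdef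
  set Z := Submodule.span K (Set.range fun r => (Psi A - Psi B) r) with hZdef
  set π : (Fin m → K) →ₗ[K] (Fin i → K) := LinearMap.funLeft K K (Fin.castLE h) with hπ
  -- V and W as ranges of vecMulLinear
  have hrange : ∀ C : Matrix (Fin i) (Fin (m - i)) K,
      Submodule.span K (Set.range fun r => Psi C r) = LinearMap.range (Psi C).vecMulLinear := by
    intro C
    rw [range_vecMulLinear]
    rfl
  -- π left-inverts vecMulLinear
  have hleft : ∀ (C : Matrix (Fin i) (Fin (m - i)) K) (v : Fin i → K),
      π ((Psi C).vecMulLinear v) = v := by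
    intro C v
    funext c
    simp only [hπ, LinearMap.funLeft_apply, Matrix.vecMulLinear_apply]
    exact psi_vecMul h C v c
  have hinj : ∀ C : Matrix (Fin i) (Fin (m - i)) K,
      Function.Injective (Psi C).vecMulLinear := by
    intro C
    exact Function.LeftInverse.injective (g := π) (hleft C)
  have hdimV : finrank K ↥V = i := by
    rw [hVdef, hrange A, LinearMap.finrank_range_of_inj (hinj A), Module.finrank_fin_fun]
  have hdimW : finrank K ↥W = i := by
    rw [hWdef, hrange B, LinearMap.finrank_range_of_inj (hinj B), Module.finrank_fin_fun]
  -- V ⊓ ker π = ⊥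
  have hVker : V ⊓ LinearMap.ker π = ⊥ := by
    rw [eq_bot_iff]
    rintro v ⟨hvV, hvk⟩
    rw [hVdef, hrange A] at hvV
    obtain ⟨u, rfl⟩ := hvV
    have : u = 0 := by
      have := hleft A u
      rw [LinearMap.mem_ker.mp hvk] at this
      exact this.symm
    simp [this]
  -- Z ≤ ker π
  have hZker : Z ≤ LinearMap.ker π := by
    rw [hZdef, Submodule.span_le]
    rintro _ ⟨r, rfl⟩
    rw [SetLike.mem_coe, LinearMap.mem_ker]
    funext c
    have hc : ((Fin.castLE h c : Fin m) : ℕ) < i := c.isLt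
    simp [hπ, LinearMap.funLeft_apply, Psi, Matrix.sub_apply, hc]
  -- V ⊔ W = V ⊔ Z
  have hmemV : ∀ r, Psi A r ∈ V := fun r => Submodule.subset_span ⟨r, rfl⟩
  have hmemW : ∀ r, Psi B r ∈ W := fun r => Submodule.subset_span ⟨r, rfl⟩
  have hmemZ : ∀ r, (Psi A - Psi B) r ∈ Z := fun r => Submodule.subset_span ⟨r, rfl⟩
  have hsup : V ⊔ W = V ⊔ Z := by
    apply le_antisymm
    · refine sup_le le_sup_left ?_
      rw [hWdef, Submodule.span_le]
      rintro _ ⟨r, rfl⟩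
      show Psi B r ∈ (V ⊔ Z : Submodule K _)
      have heq : Psi B r = Psi A r - (Psi A - Psi B) r := by
        show Psi B r = Psi A r - (Psi A r - Psi B r)
        exact (sub_sub_cancel _ _).symm
      rw [heq]
      exact sub_mem (Submodule.mem_sup_left (hmemV r)) (Submodule.mem_sup_right (hmemZ r))
    · refine sup_le le_sup_left ?_
      rw [hZdef, Submodule.span_le]
      rintro _ ⟨r, rfl⟩
      show (Psi A - Psi B) r ∈ (V ⊔ W : Submodule K _)
      have heq : (Psi A - Psi B) r = Psi A r - Psi B r := rfl
      rw [heq]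
      exact sub_mem (Submodule.mem_sup_left (hmemV r)) (Submodule.mem_sup_right (hmemW r))
  -- V ⊓ Z = ⊥
  have hdisj : V ⊓ Z = ⊥ := by
    rw [eq_bot_iff, ← hVker]
    exact inf_le_inf le_rfl hZker
  -- dim Z = rank (A - B)
  have hrowPsi : ∀ r, (Psi A - Psi B) r = ext0 K i m h ((A - B) r) := by
    intro r
    funext c
    by_cases hc : (c : ℕ) < i
    · simp [Psi, ext0, Matrix.sub_apply, hc]
    · simp [Psi, ext0, Matrix.sub_apply, hc]
  have hZmap : Z = Submodule.map (ext0 K i m h) (Submodule.span K (Set.range fun r => (A - B) r)) := by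
    have hfun : (fun r => (Psi A - Psi B) r) = (ext0 K i m h) ∘ (fun r => (A - B) r) := by
      funext r
      exact hrowPsi r
    rw [Submodule.map_span, hZdef, hfun, Set.range_comp]
  have hdimZ : finrank K ↥Z = (A - B).rank := by
    rw [hZmap, Matrix.rank_eq_finrank_span_row]
    exact (LinearEquiv.finrank_eq
      (Submodule.equivMapOfInjective _ (ext0_inj h) _)).symm
  -- put it together
  have h1 : finrank K ↥(V ⊔ W) + finrank K ↥(V ⊓ W) = i + i := by
    rw [Submodule.finrank_sup_add_finrank_inf_eq, hdimV, hdimW]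
  have h2 : finrank K ↥(V ⊔ W) = i + (A - B).rank := by
    rw [hsup]
    have := Submodule.finrank_sup_add_finrank_inf_eq V Z
    rw [hdisj, hdimV, hdimZ] at this
    simpa using this
  omega


end Aux



/-- For upper triangular `Δ, Λ ∈ U^n(K)`, with `V_i` the row space of `(I_i | Δ_[i])`
and `W_i` the row space of `(I_i | Λ_[i])`, the sum of the Grassmann distances
`Σ_{i=1}^{n} d(V_i, W_i)` equals the flag rank `frk(Δ - Λ)`.
(Each `d(V_i,W_i) = (dim(V_i+W_i) - dim(V_i∩W_i))/2`, so the statement is expressed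
with both sides multiplied by `2`.) -/
theorem sum_grassmann_distance_eq_frk_sub {K : Type*} [Field K] {n : ℕ}
    (Δ Λ : Matrix (Fin n) (Fin n) K) (hΔ : Δ ∈ UT K n) (hΛ : Λ ∈ UT K n) :
    ∑ i : Fin n,
        (finrank K ↥(rowSpace (Psi (corner Δ i)) ⊔ rowSpace (Psi (corner Λ i))) -
          finrank K ↥(rowSpace (Psi (corner Δ i)) ⊓ rowSpace (Psi (corner Λ i)))) =
      2 * frk (Δ - Λ) := by
  rw [frk, Finset.mul_sum]
  apply Finset.sum_congr rfl
  intro i _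
  have hcor : corner Δ i - corner Λ i = corner (Δ - Λ) i := by
    ext k l
    simp [corner, Matrix.sub_apply]
  simp only [rowSpace]
  have hk := key (by have := i.isLt; omega) (corner Δ i) (corner Λ i)
  rw [hcor] at hk
  exact hk
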